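/- Let m ≥ 1 and let F be a finite set of strings over the alphabet Fin m, each of length at least 2; for each j ≥ 2 let a_j be the number of elements of F of length j. If there exists a real number x > 0 such that ∑_{j≥2} a_j · x^j < m·x − 1, then there exists an infinite sequence s : ℕ → Fin m such that no element of F occurs as a contiguous block of s, i.e., for all i and every w ∈ F, w is not equal to the list (s i, s (i+1), …, s (i + length w − 1)). -/

import Mathlib

open List Finset

open scoped Classical in
/-- The finset of words of length `n` over `Fin m` avoiding every element of `F` as an infix. -/
noncomputable def millerAset {m : ℕ} (F : Finset (List (Fin m))) (n : ℕ) :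
    Finset (List (Fin m)) :=
  ((Finset.univ : Finset (Fin n → Fin m)).image List.ofFn).filter
    (fun w => ∀ u ∈ F, ¬ u <:+: w)

lemma mem_millerAset {m : ℕ} {F : Finset (List (Fin m))} {n : ℕ} {w : List (Fin m)} :
    w ∈ millerAset F n ↔ w.length = n ∧ ∀ u ∈ F, ¬ u <:+: w := by
  classical
  constructor
  · intro h
    obtain ⟨h1, h2⟩ := Finset.mem_filter.1 h
    obtain ⟨f, -, rfl⟩ := Finset.mem_image.1 h1
    exact ⟨by simp, by simpa using h2⟩
  · rintro ⟨h1, h2⟩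
    refine Finset.mem_filter.2 ⟨Finset.mem_image.2 ?_, by simpa using h2⟩
    subst h1
    exact ⟨w.get, Finset.mem_univ _, List.ofFn_get w⟩

/-- The key counting inequality. -/
lemma millerAset_count {m : ℕ} (F : Finset (List (Fin m))) (hF : ∀ w ∈ F, 2 ≤ w.length)
    (n : ℕ) :
    m * (millerAset F n).card ≤ (millerAset F (n+1)).card +
      ∑ u ∈ F.filter (fun u => u.length ≤ n + 1), (millerAset F (n + 1 - u.length)).card := by
  classical
  set S : Finset (List (Fin m)) :=
    ((millerAset F n) ×ˢ (Finset.univ : Finset (Fin m))).image (fun p => p.1 ++ [p.2]) with hS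
  have hinj : Function.Injective (fun p : List (Fin m) × Fin m => p.1 ++ [p.2]) := by
    intro a b h
    simp only at h
    have h1 : a.1 = b.1 := by
      have := congrArg List.dropLast h
      simpa using this
    have h2 : a.2 = b.2 := by
      rw [h1] at h
      have := List.append_cancel_left h
      simpa using this
    exact Prod.ext h1 h2
  have hcardS : S.card = (millerAset F n).card * m := by
    rw [hS, Finset.card_image_of_injective _ hinj, Finset.card_product, Finset.card_univ,
      Fintype.card_fin]
  have hlenS : ∀ w ∈ S, w.length = n + 1 := by
    intro w hw
    obtain ⟨⟨v, a⟩, hva, rfl⟩ := Finset.mem_image.1 hw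
    have hv : v ∈ millerAset F n := (Finset.mem_product.1 hva).1
    have := (mem_millerAset.1 hv).1
    simp [this]
  have hsub : S ⊆ millerAset F (n+1) ∪
      (F.filter (fun u => u.length ≤ n + 1)).biUnion
        (fun u => S.filter (fun w => u <:+ w)) := by
    intro w hw
    obtain ⟨⟨v, a⟩, hva, rfl⟩ := Finset.mem_image.1 hw
    have hv : v ∈ millerAset F n := (Finset.mem_product.1 hva).1
    obtain ⟨hvlen, hvav⟩ := mem_millerAset.1 hv
    by_cases hav : ∀ u ∈ F, ¬ u <:+: (v ++ [a])
    · exact Finset.mem_union_left _ (mem_millerAset.2 ⟨by simp [hvlen], hav⟩)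
    · push_neg at hav
      obtain ⟨u, huF, huinf⟩ := hav
      have hsuf : u <:+ v ++ [a] := by
        obtain ⟨s, t, hst⟩ := huinf
        cases t with
        | nil => exact ⟨s, by simpa using hst⟩
        | cons b t' =>
          exfalso
          apply hvav u huF
          have hv' : s ++ u ++ (b :: t').dropLast = v := by
            have := congrArg List.dropLast hst
            rwa [List.append_assoc, List.dropLast_append_of_ne_nil (by simp),
              List.dropLast_append_of_ne_nil (by simp), List.dropLast_concat,
              ← List.append_assoc] at this
          exact ⟨s, (b :: t').dropLast, hv'⟩
      have hulen : u.length ≤ n + 1 := by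
        have := hsuf.length_le
        simpa [hvlen] using this
      refine Finset.mem_union_right _ (Finset.mem_biUnion.2 ⟨u, Finset.mem_filter.2
        ⟨huF, hulen⟩, Finset.mem_filter.2 ⟨hw, hsuf⟩⟩)
  have hperU : ∀ u ∈ F.filter (fun u => u.length ≤ n + 1),
      (S.filter (fun w => u <:+ w)).card ≤ (millerAset F (n + 1 - u.length)).card := by
    intro u hu
    obtain ⟨huF, hulen⟩ := Finset.mem_filter.1 hu
    have hu2 : 2 ≤ u.length := hF u huF
    apply Finset.card_le_card_of_injOn (fun w => w.take (n + 1 - u.length))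
    · intro w hw
      obtain ⟨hwS, hwsuf⟩ := Finset.mem_filter.1 hw
      obtain ⟨⟨v, a⟩, hva, rfl⟩ := Finset.mem_image.1 hwS
      have hv : v ∈ millerAset F n := (Finset.mem_product.1 hva).1
      obtain ⟨hvlen, hvav⟩ := mem_millerAset.1 hv
      have hk : n + 1 - u.length ≤ n := by omega
      have htake : (v ++ [a]).take (n + 1 - u.length) = v.take (n + 1 - u.length) :=
        List.take_append_of_le_length (by omega)
      refine mem_millerAset.2 ⟨?_, ?_⟩
      · dsimp only
        rw [htake, List.length_take]
        omega
      · intro u' hu' hinf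
        dsimp only at hinf
        rw [htake] at hinf
        exact hvav u' hu' (hinf.trans (List.take_prefix _ v).isInfix)
    · intro w1 h1 w2 h2 heq
      simp only at heq
      obtain ⟨h1S, hs1⟩ := Finset.mem_filter.1 h1
      obtain ⟨h2S, hs2⟩ := Finset.mem_filter.1 h2
      obtain ⟨r1, hr1⟩ := hs1
      obtain ⟨r2, hr2⟩ := hs2
      have hl1 : w1.length = n + 1 := hlenS w1 h1S
      have hl2 : w2.length = n + 1 := hlenS w2 h2S
      have hr1l : r1.length = n + 1 - u.length := by
        have := congrArg List.length hr1
        simp at this; omega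
      have hr2l : r2.length = n + 1 - u.length := by
        have := congrArg List.length hr2
        simp at this; omega
      have ht1 : w1.take (n + 1 - u.length) = r1 := by
        rw [← hr1, ← hr1l, List.take_left]
      have ht2 : w2.take (n + 1 - u.length) = r2 := by
        rw [← hr2, ← hr2l, List.take_left]
      rw [← hr1, ← hr2, ← ht1, ← ht2, heq]
  calc m * (millerAset F n).card = S.card := by rw [hcardS, mul_comm]
    _ ≤ (millerAset F (n+1) ∪ (F.filter (fun u => u.length ≤ n + 1)).biUnion
          (fun u => S.filter (fun w => u <:+ w))).card := Finset.card_le_card hsub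
    _ ≤ (millerAset F (n+1)).card + ((F.filter (fun u => u.length ≤ n + 1)).biUnion
          (fun u => S.filter (fun w => u <:+ w))).card := Finset.card_union_le _ _
    _ ≤ (millerAset F (n+1)).card + ∑ u ∈ F.filter (fun u => u.length ≤ n + 1),
          (S.filter (fun w => u <:+ w)).card :=
        add_le_add_right (Finset.card_biUnion_le) _
    _ ≤ _ := add_le_add_right (Finset.sum_le_sum hperU) _

/-- A chain of ever-longer lists obtained by repeatedly extending. -/
noncomputable def millerChain {α : Type*} (g : List α → Prop) (h0 : g [])
    (hstep : ∀ l, g l → ∃ a, g (l ++ [a])) : ℕ → {l : List α // g l}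
  | 0 => ⟨[], h0⟩
  | n+1 => ⟨(millerChain g h0 hstep n).1 ++ [(hstep _ (millerChain g h0 hstep n).2).choose],
      (hstep _ (millerChain g h0 hstep n).2).choose_spec⟩

lemma millerChain_length {α : Type*} (g : List α → Prop) (h0 : g [])
    (hstep : ∀ l, g l → ∃ a, g (l ++ [a])) (n : ℕ) :
    (millerChain g h0 hstep n).1.length = n := by
  induction n with
  | zero => rfl
  | succ n ih => simp [millerChain, ih]

lemma millerChain_prefix {α : Type*} (g : List α → Prop) (h0 : g [])
    (hstep : ∀ l, g l → ∃ a, g (l ++ [a])) {n k : ℕ} (h : n ≤ k) :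
    (millerChain g h0 hstep n).1 <+: (millerChain g h0 hstep k).1 := by
  induction k, h using Nat.le_induction with
  | base => exact List.prefix_refl _
  | succ k hk ih =>
    refine ih.trans ?_
    show _ <+: (millerChain g h0 hstep k).1 ++ _
    exact List.prefix_append _ _

theorem exists_infinite_sequence_avoiding (m : ℕ) (hm : 1 ≤ m)
    (F : Finset (List (Fin m))) (hF : ∀ w ∈ F, 2 ≤ w.length)
    (hx : ∃ x : ℝ, 0 < x ∧
      ∑' j : ℕ, ((F.filter (fun w => w.length = j)).card : ℝ) * x ^ j < m * x - 1) :
    ∃ s : ℕ → Fin m, ∀ i : ℕ, ∀ w ∈ F,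
      w ≠ List.ofFn (fun t : Fin w.length => s (i + t)) := by
  classical
  obtain ⟨x, hx0, hxsum⟩ := hx
  -- convert the tsum hypothesis to a finite sum over F
  have htsum : (∑' j : ℕ, ((F.filter (fun w => w.length = j)).card : ℝ) * x ^ j)
      = ∑ u ∈ F, x ^ u.length := by
    rw [tsum_eq_sum (s := F.image List.length) ?_]
    · rw [← Finset.sum_fiberwise_of_maps_to (g := List.length) (t := F.image List.length)
        (fun u hu => Finset.mem_image_of_mem List.length hu) (fun u => x ^ u.length)]
      refine Finset.sum_congr rfl (fun j hj => ?_)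
      rw [Finset.sum_congr rfl (fun u hu => by rw [(Finset.mem_filter.1 hu).2])]
      simp [mul_comm]
    · intro j hj
      have : F.filter (fun w => w.length = j) = ∅ := by
        refine Finset.filter_eq_empty_iff.2 ?_
        intro u hu hlen
        exact hj (Finset.mem_image.2 ⟨u, hu, hlen⟩)
      simp [this]
  have hsum : ∑ u ∈ F, x ^ u.length < m * x - 1 := htsum ▸ hxsum
  set c : ℕ → ℝ := fun n => ((millerAset F n).card : ℝ) with hc
  have hc0 : (millerAset F 0).card = 1 := by
    have hA0 : millerAset F 0 = {([] : List (Fin m))} := by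
      ext w
      rw [mem_millerAset]
      simp only [Finset.mem_singleton, List.length_eq_zero_iff]
      constructor
      · rintro ⟨rfl, -⟩; rfl
      · rintro rfl
        refine ⟨rfl, fun u hu hinf => ?_⟩
        have := hF u hu
        have : u = [] := by simpa using hinf
        simp_all
    simp [hA0]
  -- bound on the weighted sum
  have hK : ∑ u ∈ F, x ^ (u.length - 1) ≤ (m : ℝ) - 1 / x := by
    have h1 : ∑ u ∈ F, x ^ (u.length - 1) = (∑ u ∈ F, x ^ u.length) / x := by
      rw [Finset.sum_div]
      refine Finset.sum_congr rfl (fun u hu => ?_)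
      have h2 : 2 ≤ u.length := hF u hu
      rw [eq_div_iff hx0.ne', ← pow_succ]
      congr 1
      omega
    have h2 : (m : ℝ) - 1 / x = (m * x - 1) / x := by field_simp
    rw [h1, h2]
    gcongr
  -- the key growth inequality, by strong induction
  have key : ∀ n, c n ≤ x * c (n + 1) := by
    intro n
    induction n using Nat.strong_induction_on with
    | _ n IH =>
      have chain : ∀ d k, k + d = n → c k ≤ x ^ d * c n := by
        intro d
        induction d with
        | zero =>
          intro k hk
          have : k = n := by omega
          simp [this]
        | succ d ihd =>
          intro k hk
          have h1 : c k ≤ x * c (k + 1) := IH k (by omega)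
          have h2 : c (k + 1) ≤ x ^ d * c n := ihd (k + 1) (by omega)
          calc c k ≤ x * c (k + 1) := h1
            _ ≤ x * (x ^ d * c n) := mul_le_mul_of_nonneg_left h2 hx0.le
            _ = x ^ (d + 1) * c n := by ring
      have hcount := millerAset_count F hF n
      have hcountR : (m : ℝ) * c n ≤ c (n + 1) +
          ∑ u ∈ F.filter (fun u => u.length ≤ n + 1), c (n + 1 - u.length) := by
        show (m : ℝ) * ((millerAset F n).card : ℝ) ≤ ((millerAset F (n + 1)).card : ℝ) +
          ∑ u ∈ F.filter (fun u => u.length ≤ n + 1),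
            ((millerAset F (n + 1 - u.length)).card : ℝ)
        exact_mod_cast hcount
      have hterm : ∀ u ∈ F.filter (fun u => u.length ≤ n + 1),
          c (n + 1 - u.length) ≤ x ^ (u.length - 1) * c n := by
        intro u hu
        obtain ⟨huF, hul⟩ := Finset.mem_filter.1 hu
        have h2 := hF u huF
        exact chain (u.length - 1) (n + 1 - u.length) (by omega)
      have hsum2 : ∑ u ∈ F.filter (fun u => u.length ≤ n + 1), c (n + 1 - u.length) ≤
          (∑ u ∈ F, x ^ (u.length - 1)) * c n := by
        rw [Finset.sum_mul]
        calc ∑ u ∈ F.filter (fun u => u.length ≤ n + 1), c (n + 1 - u.length)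
            ≤ ∑ u ∈ F.filter (fun u => u.length ≤ n + 1), x ^ (u.length - 1) * c n :=
              Finset.sum_le_sum hterm
          _ ≤ ∑ u ∈ F, x ^ (u.length - 1) * c n :=
              Finset.sum_le_sum_of_subset_of_nonneg (Finset.filter_subset _ _)
                (fun u _ _ => mul_nonneg (pow_nonneg hx0.le _) (Nat.cast_nonneg _))
      have hcn : (0 : ℝ) ≤ c n := Nat.cast_nonneg _
      have h3 : (∑ u ∈ F, x ^ (u.length - 1)) * c n ≤ ((m : ℝ) - 1 / x) * c n :=
        mul_le_mul_of_nonneg_right hK hcn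
      have h4 : (1 / x) * c n ≤ c (n + 1) := by nlinarith
      calc c n = x * ((1 / x) * c n) := by field_simp
        _ ≤ x * c (n + 1) := mul_le_mul_of_nonneg_left h4 hx0.le
  have hpos : ∀ n, 0 < (millerAset F n).card := by
    intro n
    induction n with
    | zero => simp [hc0]
    | succ n ih =>
      have h1 : (1 : ℝ) ≤ c n := by
        show (1 : ℝ) ≤ ((millerAset F n).card : ℝ)
        exact_mod_cast ih
      have h2 := key n
      have h3 : (0 : ℝ) < c (n + 1) := by nlinarith
      have h3' : (0 : ℝ) < ((millerAset F (n + 1)).card : ℝ) := h3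
      exact_mod_cast h3'
  have hne : ∀ n, (millerAset F n).Nonempty := fun n => Finset.card_pos.1 (hpos n)
  -- "good" prefixes: extendable to avoiding words of every length
  set good : List (Fin m) → Prop :=
    fun p => ∀ n, p.length ≤ n → ∃ w ∈ millerAset F n, p <+: w with hgood
  have mono : ∀ (q : List (Fin m)) (k n : ℕ), q.length ≤ k → k ≤ n →
      (∃ w ∈ millerAset F n, q <+: w) → ∃ w ∈ millerAset F k, q <+: w := by
    rintro q k n hqk hkn ⟨w, hw, hqw⟩
    obtain ⟨hwlen, hwav⟩ := mem_millerAset.1 hw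
    refine ⟨w.take k, mem_millerAset.2 ⟨by rw [List.length_take]; omega, ?_⟩, ?_⟩
    · intro u hu hinf
      exact hwav u hu (hinf.trans (List.take_prefix k w).isInfix)
    · rw [List.prefix_take_iff]
      exact ⟨hqw, hqk⟩
  have good_avoid : ∀ p, good p → ∀ u ∈ F, ¬ u <:+: p := by
    intro p hp
    obtain ⟨w, hw, hpw⟩ := hp p.length le_rfl
    have heq : p = w := hpw.eq_of_length ((mem_millerAset.1 hw).1).symm
    rw [heq]
    exact (mem_millerAset.1 hw).2
  have good_nil : good [] := by
    intro n _
    obtain ⟨w, hw⟩ := hne n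
    exact ⟨w, hw, List.nil_prefix⟩
  have good_step : ∀ p, good p → ∃ a : Fin m, good (p ++ [a]) := by
    intro p hp
    by_contra hcon
    push_neg at hcon
    simp only [hgood, not_forall] at hcon
    choose nf hnf using hcon
    have hnf1 : ∀ a : Fin m, (p ++ [a]).length ≤ nf a := fun a => (hnf a).choose
    have hnf2 : ∀ a : Fin m, ¬ ∃ w ∈ millerAset F (nf a), (p ++ [a]) <+: w :=
      fun a => (hnf a).choose_spec
    set N := Finset.univ.sup nf with hN
    have hup : ∀ a : Fin m, nf a ≤ N := fun a => Finset.le_sup (Finset.mem_univ a)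
    have hNlen : p.length + 1 ≤ N := by
      have h1 := hnf1 ⟨0, hm⟩
      have h2 := hup ⟨0, hm⟩
      simp at h1
      omega
    obtain ⟨w, hw, hpw⟩ := hp N (by omega)
    obtain ⟨r, rfl⟩ := hpw
    have hr : r ≠ [] := by
      intro h
      subst h
      have := (mem_millerAset.1 hw).1
      simp at this
      omega
    set a := r.head hr with ha
    have hw2 : (p ++ [a]) <+: p ++ r := by
      refine ⟨r.tail, ?_⟩
      rw [List.append_assoc]
      congr 1
      show a :: r.tail = r
      exact List.cons_head_tail hr
    exact hnf2 a (mono (p ++ [a]) (nf a) N (hnf1 a) (hup a) ⟨p ++ r, hw, hw2⟩)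
  -- build the infinite chain and the sequence
  set P : ℕ → {l : List (Fin m) // good l} := millerChain good good_nil good_step with hP
  have hPlen : ∀ n, (P n).1.length = n := millerChain_length good good_nil good_step
  have hPpre : ∀ {n k : ℕ}, n ≤ k → (P n).1 <+: (P k).1 :=
    fun h => millerChain_prefix good good_nil good_step h
  refine ⟨fun i => (P (i + 1)).1[i]'(by rw [hPlen]; omega), ?_⟩
  intro i w hwF heq
  set L := w.length with hL
  set l := (P (i + L)).1 with hl
  have hlen : l.length = i + L := hPlen _
  have hsl : ∀ j (hj : j < i + L), (P (j + 1)).1[j]'(by rw [hPlen]; omega) = l[j]'(by rw [hlen]; exact hj) :=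
    fun j hj => (hPpre (show j + 1 ≤ i + L from hj)).getElem _
  have hw2 : w = l.drop i := by
    apply List.ext_getElem
    · rw [List.length_drop, hlen]
      omega
    · intro t h1 h2
      have ht : t < L := h1
      have e2 : (l.drop i)[t]'h2 = l[i + t]'(by rw [hlen]; omega) := by simp
      rw [e2, List.getElem_of_eq heq, List.getElem_ofFn]
      exact hsl (i + t) (by omega)
  have hinf : w <:+: l := by
    rw [hw2]
    exact (List.drop_suffix i l).isInfix
  exact good_avoid l (P (i + L)).2 w hwF hinf
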